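/- Let X₁,…,X_n, Y₁,…,Y_n be independent real-valued random variables, p ≥ 1 an integer, V(x) = 1 + |x|^p, and A_n = max_{1≤i≤n} (E V(X_i) ∨ E V(Y_i)) < ∞. Then sup over measurable f with |f| ≤ V of |E f(X₁+⋯+X_n) − E f(Y₁+⋯+Y_n)| is at most 2^{p+1} n^{p+1} A_n max_{1≤i≤n} ‖P_{X_i} − P_{Y_i}‖_V. -/

import Mathlib

/- Statement 19: For independent real random variables X₁,…,X_n, Y₁,…,Y_n with
V(x) = 1 + |x|^p and A_n = max_i (E V(X_i) ∨ E V(Y_i)) < ∞,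
sup_{|f| ≤ V} |E f(ΣX_i) − E f(ΣY_i)| ≤ 2^{p+1} n^{p+1} A_n max_i ‖P_{X_i} − P_{Y_i}‖_V. -/

open MeasureTheory ProbabilityTheory Filter Set
open scoped ENNReal NNReal

noncomputable section

/-- `V`-norm distance `‖μ − ν‖_V = sup{|∫ f dμ − ∫ f dν| : f measurable, |f| ≤ V}`. -/
noncomputable def vDist {E : Type*} [MeasurableSpace E] (V : E → ℝ) (μ ν : Measure E) : ℝ :=
  ⨆ f : {f : E → ℝ // Measurable f ∧ ∀ x, |f x| ≤ V x},
    |(∫ x, f.1 x ∂μ) - ∫ x, f.1 x ∂ν|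

lemma myVmul (p : ℕ) (a b : ℝ) :
    1 + |a + b| ^ p ≤ 2 ^ p * ((1 + |a| ^ p) * (1 + |b| ^ p)) := by
  have h1 : |a + b| ^ p ≤ (|a| + |b|) ^ p :=
    pow_le_pow_left₀ (abs_nonneg _) (abs_add_le a b) p
  have h2 : (|a| + |b|) ^ p ≤ 2 ^ p * (|a| ^ p + |b| ^ p) := by
    have hm : |a| + |b| ≤ 2 * max |a| |b| := by
      rcases le_total |a| |b| with h | h
      · rw [max_eq_right h]; linarith
      · rw [max_eq_left h]; linarith
    calc (|a| + |b|) ^ p ≤ (2 * max |a| |b|) ^ p :=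
          pow_le_pow_left₀ (by positivity) hm p
      _ = 2 ^ p * (max |a| |b|) ^ p := by rw [mul_pow]
      _ ≤ 2 ^ p * (|a| ^ p + |b| ^ p) := by
          gcongr
          rcases le_total |a| |b| with h | h
          · rw [max_eq_right h]; nlinarith [pow_nonneg (abs_nonneg a) p]
          · rw [max_eq_left h]; nlinarith [pow_nonneg (abs_nonneg b) p]
  have h3 : (1:ℝ) ≤ 2 ^ p := one_le_pow₀ (by norm_num)
  nlinarith [pow_nonneg (abs_nonneg a) p, pow_nonneg (abs_nonneg b) p,
    mul_nonneg (pow_nonneg (abs_nonneg a) p) (pow_nonneg (abs_nonneg b) p)]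

lemma myPowSum {ι : Type*} (s : Finset ι) (g : ι → ℝ) (p : ℕ) (hp : 1 ≤ p) :
    |∑ i ∈ s, g i| ^ p ≤ (s.card : ℝ) ^ (p - 1) * ∑ i ∈ s, |g i| ^ p := by
  rcases s.eq_empty_or_nonempty with rfl | hs
  · simp [zero_pow (by omega : p ≠ 0)]
  have h1 : |∑ i ∈ s, g i| ^ p ≤ (∑ i ∈ s, |g i|) ^ p :=
    pow_le_pow_left₀ (abs_nonneg _) (Finset.abs_sum_le_sum_abs _ _) p
  have h2 := pow_sum_div_card_le_sum_pow (s := s) (f := fun i => |g i|)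
      (fun i _ => abs_nonneg _) (p - 1)
  rw [Nat.sub_add_cancel hp] at h2
  have hc : (0:ℝ) < (s.card : ℝ) ^ (p - 1) := by
    have := hs.card_pos; positivity
  calc |∑ i ∈ s, g i| ^ p ≤ (∑ i ∈ s, |g i|) ^ p := h1
    _ = (s.card : ℝ) ^ (p-1) * ((∑ i ∈ s, |g i|) ^ p / (s.card : ℝ) ^ (p-1)) := by
        field_simp
    _ ≤ (s.card : ℝ) ^ (p-1) * ∑ i ∈ s, |g i| ^ p := by gcongr

lemma myBddAbove {E : Type*} [MeasurableSpace E] {V : E → ℝ} {μ ν : Measure E}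
    (hμ : Integrable V μ) (hν : Integrable V ν) :
    BddAbove (Set.range fun f : {f : E → ℝ // Measurable f ∧ ∀ x, |f x| ≤ V x} =>
      |(∫ x, f.1 x ∂μ) - ∫ x, f.1 x ∂ν|) := by
  refine ⟨(∫ x, V x ∂μ) + ∫ x, V x ∂ν, ?_⟩
  rintro r ⟨⟨f, hf, hfV⟩, rfl⟩
  have h1 : ‖∫ x, f x ∂μ‖ ≤ ∫ x, V x ∂μ :=
    norm_integral_le_of_norm_le hμ (Eventually.of_forall fun x => by simpa using hfV x)
  have h2 : ‖∫ x, f x ∂ν‖ ≤ ∫ x, V x ∂ν :=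
    norm_integral_le_of_norm_le hν (Eventually.of_forall fun x => by simpa using hfV x)
  simp only [Real.norm_eq_abs] at h1 h2
  calc |(∫ x, f x ∂μ) - ∫ x, f x ∂ν| ≤ |∫ x, f x ∂μ| + |∫ x, f x ∂ν| := abs_sub _ _
    _ ≤ _ := add_le_add h1 h2

lemma abs_le_vDist {E : Type*} [MeasurableSpace E] {V : E → ℝ} {μ ν : Measure E}
    (hμ : Integrable V μ) (hν : Integrable V ν)
    (f : E → ℝ) (hf : Measurable f) (hfV : ∀ x, |f x| ≤ V x) :
    |(∫ x, f x ∂μ) - ∫ x, f x ∂ν| ≤ vDist V μ ν :=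
  le_ciSup (myBddAbove hμ hν) (⟨f, hf, hfV⟩ :
    {f : E → ℝ // Measurable f ∧ ∀ x, |f x| ≤ V x})

lemma vDist_nonneg' {E : Type*} [MeasurableSpace E] {V : E → ℝ} {μ ν : Measure E}
    (hμ : Integrable V μ) (hν : Integrable V ν) (hV0 : ∀ x, 0 ≤ V x) :
    0 ≤ vDist V μ ν := by
  have := abs_le_vDist hμ hν 0 measurable_const (fun x => by simpa using hV0 x)
  simpa using this

lemma myShift (p : ℕ) {μ ν : Measure ℝ}
    (hμ : Integrable (fun x => 1 + |x| ^ p) μ) (hν : Integrable (fun x => 1 + |x| ^ p) ν)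
    (f : ℝ → ℝ) (hf : Measurable f) (hfV : ∀ x, |f x| ≤ 1 + |x| ^ p) (a : ℝ) :
    |(∫ b, f (a + b) ∂μ) - ∫ b, f (a + b) ∂ν|
      ≤ 2 ^ p * (1 + |a| ^ p) * vDist (fun x => 1 + |x| ^ p) μ ν := by
  set c : ℝ := 2 ^ p * (1 + |a| ^ p) with hc_def
  have hc : 0 < c := by positivity
  set g : ℝ → ℝ := fun b => f (a + b) * c⁻¹ with hg_def
  have hg : Measurable g := (hf.comp (measurable_const_add a)).mul_const _
  have hgV : ∀ b, |g b| ≤ 1 + |b| ^ p := by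
    intro b
    have h1 := myVmul p a b
    have h2 := hfV (a + b)
    rw [hg_def]
    simp only [abs_mul, abs_inv, abs_of_pos hc]
    rw [← div_eq_mul_inv, div_le_iff₀ hc]
    calc |f (a + b)| ≤ 1 + |a + b| ^ p := h2
      _ ≤ 2 ^ p * ((1 + |a| ^ p) * (1 + |b| ^ p)) := h1
      _ = (1 + |b| ^ p) * c := by rw [hc_def]; ring
  have key := abs_le_vDist hμ hν g hg hgV
  have hgμ : ∫ b, g b ∂μ = (∫ b, f (a + b) ∂μ) * c⁻¹ := integral_mul_const _ _
  have hgν : ∫ b, g b ∂ν = (∫ b, f (a + b) ∂ν) * c⁻¹ := integral_mul_const _ _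
  rw [hgμ, hgν, ← sub_mul, abs_mul, abs_inv, abs_of_pos hc, ← div_eq_mul_inv,
    div_le_iff₀ hc] at key
  calc |(∫ b, f (a + b) ∂μ) - ∫ b, f (a + b) ∂ν|
      ≤ vDist (fun x => 1 + |x| ^ p) μ ν * c := key
    _ = c * vDist (fun x => 1 + |x| ^ p) μ ν := mul_comm _ _

theorem statement19
    {Ω : Type*} [MeasurableSpace Ω] (P : Measure Ω) [IsProbabilityMeasure P]
    (n : ℕ) (hn : 1 ≤ n) (p : ℕ) (hp : 1 ≤ p)
    (X Y : Fin n → Ω → ℝ)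
    (hXmeas : ∀ i, Measurable (X i)) (hYmeas : ∀ i, Measurable (Y i))
    -- X₁,…,X_n, Y₁,…,Y_n are (jointly) independent
    (hindep : iIndepFun (Sum.elim X Y) P)
    -- integrability: A_n < ∞
    (hXint : ∀ i, Integrable (fun ω => 1 + |X i ω| ^ p) P)
    (hYint : ∀ i, Integrable (fun ω => 1 + |Y i ω| ^ p) P) :
    let V : ℝ → ℝ := fun x => 1 + |x| ^ p
    let An : ℝ := ⨆ i : Fin n,
      max (∫ ω, (1 + |X i ω| ^ p) ∂P) (∫ ω, (1 + |Y i ω| ^ p) ∂P)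
    vDist V (P.map (fun ω => ∑ i, X i ω)) (P.map (fun ω => ∑ i, Y i ω))
      ≤ 2 ^ (p+1) * (n:ℝ) ^ (p+1) * An *
          ⨆ i : Fin n, vDist V (P.map (X i)) (P.map (Y i)) := by
  intro V An
  classical
  haveI : Nonempty (Fin n) := Fin.pos_iff_nonempty.mp hn
  set D : ℝ := ⨆ i : Fin n, vDist V (P.map (X i)) (P.map (Y i)) with hD_def
  have hVdef : ∀ x, V x = 1 + |x| ^ p := fun _ => rfl
  have hVmeas : Measurable V := by
    have : Measurable fun x : ℝ => 1 + |x| ^ p :=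
      measurable_const.add ((measurable_id.abs).pow_const p)
    exact this
  have hV0 : ∀ x, 0 ≤ V x := fun x => by rw [hVdef]; positivity
  have hV1 : ∀ x, 1 ≤ V x := fun x => by
    rw [hVdef]; nlinarith [pow_nonneg (abs_nonneg x) p]
  -- the joint family
  set Z : Fin n ⊕ Fin n → Ω → ℝ := Sum.elim X Y with hZ_def
  have hZmeas : ∀ j, Measurable (Z j) := by
    rintro (i | i)
    · exact hXmeas i
    · exact hYmeas i
  have hZVint : ∀ j, Integrable (fun ω => 1 + |Z j ω| ^ p) P := by
    rintro (i | i)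
    · exact hXint i
    · exact hYint i
  have hZpow : ∀ j, Integrable (fun ω => |Z j ω| ^ p) P := by
    intro j
    refine (hZVint j).mono' ((hZmeas j).abs.pow_const p).aestronglyMeasurable
      (Eventually.of_forall fun ω => ?_)
    rw [Real.norm_eq_abs, abs_of_nonneg (by positivity)]
    nlinarith [pow_nonneg (abs_nonneg (Z j ω)) p]
  -- An facts
  have hAn_eq : An = ⨆ i : Fin n,
      max (∫ ω, (1 + |X i ω| ^ p) ∂P) (∫ ω, (1 + |Y i ω| ^ p) ∂P) := rfl
  have hAn : ∀ i : Fin n,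
      max (∫ ω, (1 + |X i ω| ^ p) ∂P) (∫ ω, (1 + |Y i ω| ^ p) ∂P) ≤ An := by
    intro i
    rw [hAn_eq]
    exact le_ciSup (f := fun i : Fin n =>
      max (∫ ω, (1 + |X i ω| ^ p) ∂P) (∫ ω, (1 + |Y i ω| ^ p) ∂P))
      (Set.Finite.bddAbove (Set.finite_range _)) i
  have hEZ : ∀ j, ∫ ω, |Z j ω| ^ p ∂P ≤ An - 1 := by
    rintro (i | i)
    · have h1 : ∫ ω, (1 + |X i ω| ^ p) ∂P
          = (∫ _ω, (1:ℝ) ∂P) + ∫ ω, |X i ω| ^ p ∂P :=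
        integral_add (integrable_const 1) (hZpow (Sum.inl i))
      simp only [integral_const, measure_univ, ENNReal.toReal_one, smul_eq_mul,
        one_mul, probReal_univ] at h1
      have h2 := le_trans (le_max_left _ _) (hAn i)
      have h3 : ∫ ω, |Z (Sum.inl i) ω| ^ p ∂P = ∫ ω, |X i ω| ^ p ∂P := rfl
      rw [h3]; linarith
    · have h1 : ∫ ω, (1 + |Y i ω| ^ p) ∂P
          = (∫ _ω, (1:ℝ) ∂P) + ∫ ω, |Y i ω| ^ p ∂P :=
        integral_add (integrable_const 1) (hZpow (Sum.inr i))
      simp only [integral_const, measure_univ, ENNReal.toReal_one, smul_eq_mul,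
        one_mul, probReal_univ] at h1
      have h2 := le_trans (le_max_right _ _) (hAn i)
      have h3 : ∫ ω, |Z (Sum.inr i) ω| ^ p ∂P = ∫ ω, |Y i ω| ^ p ∂P := rfl
      rw [h3]; linarith
  obtain ⟨i0⟩ := (inferInstance : Nonempty (Fin n))
  have hAn1 : 1 ≤ An := by
    have h1 : (1:ℝ) = ∫ _ω, (1:ℝ) ∂P := by simp
    have h2 : ∫ _ω, (1:ℝ) ∂P ≤ ∫ ω, (1 + |X i0 ω| ^ p) ∂P :=
      integral_mono (integrable_const 1) (hXint i0)
        (fun ω => le_add_of_nonneg_right (by positivity))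
    have := le_trans (le_max_left _ _) (hAn i0)
    linarith
  -- D facts
  have hVXmap : ∀ i, Integrable V (P.map (X i)) := fun i =>
    (integrable_map_measure hVmeas.aestronglyMeasurable (hXmeas i).aemeasurable).mpr (hXint i)
  have hVYmap : ∀ i, Integrable V (P.map (Y i)) := fun i =>
    (integrable_map_measure hVmeas.aestronglyMeasurable (hYmeas i).aemeasurable).mpr (hYint i)
  have hD : ∀ i, vDist V (P.map (X i)) (P.map (Y i)) ≤ D := by
    intro i
    rw [hD_def]
    exact le_ciSup (f := fun i : Fin n => vDist V (P.map (X i)) (P.map (Y i)))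
      (Set.Finite.bddAbove (Set.finite_range _)) i
  have hD0 : 0 ≤ D := le_trans (vDist_nonneg' (hVXmap i0) (hVYmap i0) hV0) (hD i0)
  -- the key estimate
  have key : ∀ f : ℝ → ℝ, Measurable f → (∀ x, |f x| ≤ V x) →
      |(∫ ω, f (∑ i, X i ω) ∂P) - ∫ ω, f (∑ i, Y i ω) ∂P|
        ≤ 2 ^ p * (n:ℝ) ^ (p+1) * An * D := by
    intro f hf hfV
    set S : ℕ → Ω → ℝ := fun k ω => ∑ i : Fin n, if (i:ℕ) < k then X i ω else Y i ω
      with hS_def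
    set F : ℕ → ℝ := fun k => ∫ ω, f (S k ω) ∂P with hF_def
    have hS0 : S 0 = fun ω => ∑ i, Y i ω := by funext ω; simp [hS_def]
    have hSn : S n = fun ω => ∑ i, X i ω := by
      funext ω; simp only [hS_def]
      exact Finset.sum_congr rfl fun i _ => by simp [i.isLt]
    have hterm : ∀ k ∈ Finset.range n,
        |F (k+1) - F k| ≤ 2 ^ p * ((n:ℝ) ^ p * An) * D := by
      intro k hkr
      have hk : k < n := Finset.mem_range.mp hkr
      set k' : Fin n := ⟨k, hk⟩ with hk'_def
      set s1 : Finset (Fin n) := Finset.univ.filter (fun i => (i:ℕ) < k) with hs1_def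
      set s2 : Finset (Fin n) := Finset.univ.filter (fun i => k < (i:ℕ)) with hs2_def
      set T : Ω → ℝ := fun ω => (∑ i ∈ s1, X i ω) + ∑ i ∈ s2, Y i ω with hT_def
      have hk's1 : k' ∉ s1 := by simp [hs1_def, hk'_def]
      have hk's2 : k' ∉ s2 := by simp [hs2_def, hk'_def]
      have hSk : S k = fun ω => T ω + Y k' ω := by
        funext ω
        have hfilt : Finset.univ.filter (fun i : Fin n => ¬ (i:ℕ) < k)
            = insert k' s2 := by
          ext i
          simp only [Finset.mem_filter, Finset.mem_univ, true_and, Finset.mem_insert,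
            hs2_def, hk'_def, Fin.ext_iff]
          omega
        simp only [hS_def, Finset.sum_ite, hfilt, Finset.sum_insert hk's2, hT_def]
        ring
      have hSk1 : S (k+1) = fun ω => T ω + X k' ω := by
        funext ω
        have hfilt1 : Finset.univ.filter (fun i : Fin n => (i:ℕ) < k+1)
            = insert k' s1 := by
          ext i
          simp only [Finset.mem_filter, Finset.mem_univ, true_and, Finset.mem_insert,
            hs1_def, hk'_def, Fin.ext_iff]
          omega
        have hfilt2 : Finset.univ.filter (fun i : Fin n => ¬ (i:ℕ) < k+1) = s2 := by
          ext i
          simp only [Finset.mem_filter, Finset.mem_univ, true_and, hs2_def]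
          omega
        simp only [hS_def, Finset.sum_ite, hfilt1, hfilt2, Finset.sum_insert hk's1, hT_def]
        ring
      have hTmeas : Measurable T :=
        (Finset.measurable_sum s1 (fun i _ => hXmeas i)).add
          (Finset.measurable_sum s2 (fun i _ => hYmeas i))
      set A : Finset (Fin n ⊕ Fin n) := s1.disjSum s2 with hA_def
      have hTsum : T = ∑ j ∈ A, Z j := by
        funext ω
        rw [Finset.sum_apply]
        simp only [hA_def, Finset.sum_disjSum, hZ_def, Sum.elim_inl, Sum.elim_inr, hT_def]
      have hcardA : (A.card : ℝ) ≤ n := by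
        have hdisj : Disjoint s1 s2 := by
          rw [Finset.disjoint_left]
          intro i h1 h2
          simp only [hs1_def, Finset.mem_filter, Finset.mem_univ, true_and] at h1
          simp only [hs2_def, Finset.mem_filter, Finset.mem_univ, true_and] at h2
          omega
        have h1 : A.card = s1.card + s2.card := Finset.card_disjSum _ _
        have h2 : (s1 ∪ s2).card = s1.card + s2.card := Finset.card_union_of_disjoint hdisj
        have h3 : (s1 ∪ s2).card ≤ n := by
          calc (s1 ∪ s2).card ≤ (Finset.univ : Finset (Fin n)).card :=
                Finset.card_le_card (Finset.subset_univ _)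
            _ = n := Finset.card_fin n
        have : A.card ≤ n := by omega
        exact_mod_cast this
      -- independence
      have hindepX : IndepFun T (X k') P := by
        have h := hindep.indepFun_finsetSum_of_notMem hZmeas
          (s := A) (i := Sum.inl k') (by simp [hA_def, hs1_def, hk'_def])
        rw [hTsum]
        exact h
      have hindepY : IndepFun T (Y k') P := by
        have h := hindep.indepFun_finsetSum_of_notMem hZmeas
          (s := A) (i := Sum.inr k') (by simp [hA_def, hs2_def, hk'_def])
        rw [hTsum]
        exact h
      have hmapTX : P.map (fun ω => (T ω, X k' ω)) = (P.map T).prod (P.map (X k')) :=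
        (indepFun_iff_map_prod_eq_prod_map_map hTmeas.aemeasurable
          (hXmeas k').aemeasurable).mp hindepX
      have hmapTY : P.map (fun ω => (T ω, Y k' ω)) = (P.map T).prod (P.map (Y k')) :=
        (indepFun_iff_map_prod_eq_prod_map_map hTmeas.aemeasurable
          (hYmeas k').aemeasurable).mp hindepY
      -- integrability of V ∘ T and its integral bound
      have hTbound : ∀ ω, V (T ω) ≤ 1 + (n:ℝ)^(p-1) * ∑ j ∈ A, |Z j ω| ^ p := by
        intro ω
        have hTω : T ω = ∑ j ∈ A, Z j ω := by rw [hTsum, Finset.sum_apply]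
        have h1 : |T ω| ^ p ≤ ((A.card : ℝ)) ^ (p-1) * ∑ j ∈ A, |Z j ω| ^ p := by
          rw [hTω]; exact myPowSum A (fun j => Z j ω) p hp
        have h2 : ((A.card : ℝ)) ^ (p-1) ≤ (n:ℝ) ^ (p-1) :=
          pow_le_pow_left₀ (by positivity) hcardA _
        have h3 : (0:ℝ) ≤ ∑ j ∈ A, |Z j ω| ^ p :=
          Finset.sum_nonneg fun j _ => by positivity
        rw [hVdef]
        nlinarith [mul_le_mul_of_nonneg_right h2 h3]
      have hGint : Integrable (fun ω => 1 + (n:ℝ)^(p-1) * ∑ j ∈ A, |Z j ω| ^ p) P :=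
        (integrable_const 1).add ((integrable_finset_sum A (fun j _ => hZpow j)).const_mul _)
      have hVTint : Integrable (fun ω => V (T ω)) P := by
        refine hGint.mono' (hVmeas.comp hTmeas).aestronglyMeasurable
          (Eventually.of_forall fun ω => ?_)
        rw [Real.norm_eq_abs, abs_of_nonneg (hV0 _)]
        exact hTbound ω
      have hVTle : ∫ ω, V (T ω) ∂P ≤ (n:ℝ) ^ p * An := by
        have h1 : ∫ ω, V (T ω) ∂P
            ≤ ∫ ω, (1 + (n:ℝ)^(p-1) * ∑ j ∈ A, |Z j ω| ^ p) ∂P :=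
          integral_mono hVTint hGint hTbound
        have h2 : ∫ ω, (1 + (n:ℝ)^(p-1) * ∑ j ∈ A, |Z j ω| ^ p) ∂P
            = 1 + (n:ℝ)^(p-1) * ∑ j ∈ A, ∫ ω, |Z j ω| ^ p ∂P := by
          rw [integral_add (integrable_const 1)
            ((integrable_finset_sum A (fun j _ => hZpow j)).const_mul _)]
          rw [integral_const_mul, integral_finset_sum A (fun j _ => hZpow j)]
          simp
        have h3 : ∑ j ∈ A, ∫ ω, |Z j ω| ^ p ∂P ≤ (A.card : ℝ) * (An - 1) := by
          have := Finset.sum_le_card_nsmul A (fun j => ∫ ω, |Z j ω| ^ p ∂P) (An - 1)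
            (fun j _ => hEZ j)
          simpa [nsmul_eq_mul] using this
        have h4 : (A.card : ℝ) * (An - 1) ≤ (n:ℝ) * (An - 1) :=
          mul_le_mul_of_nonneg_right hcardA (by linarith)
        have h5 : (n:ℝ)^(p-1) * ((n:ℝ) * (An - 1)) = (n:ℝ)^p * (An - 1) := by
          rw [← mul_assoc, ← pow_succ, Nat.sub_add_cancel hp]
        have h6 : (1:ℝ) ≤ (n:ℝ)^p := one_le_pow₀ (by exact_mod_cast hn)
        have h7 : (0:ℝ) ≤ (n:ℝ)^(p-1) := by positivity
        nlinarith [mul_le_mul_of_nonneg_left (le_trans h3 h4) h7]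
      -- product structure
      set μk : Measure ℝ := P.map (X k') with hμk_def
      set νk : Measure ℝ := P.map (Y k') with hνk_def
      set ρ : Measure ℝ := P.map T with hρ_def
      haveI : IsProbabilityMeasure ρ := Measure.isProbabilityMeasure_map hTmeas.aemeasurable
      haveI : IsProbabilityMeasure μk := Measure.isProbabilityMeasure_map (hXmeas k').aemeasurable
      haveI : IsProbabilityMeasure νk := Measure.isProbabilityMeasure_map (hYmeas k').aemeasurable
      have hVρint : Integrable V ρ :=
        (integrable_map_measure hVmeas.aestronglyMeasurable hTmeas.aemeasurable).mpr hVTint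
      have hVρeq : ∫ a, V a ∂ρ = ∫ ω, V (T ω) ∂P :=
        integral_map hTmeas.aemeasurable hVmeas.aestronglyMeasurable
      have hVμk : Integrable V μk := hVXmap k'
      have hVνk : Integrable V νk := hVYmap k'
      set Fab : ℝ × ℝ → ℝ := fun q => f (q.1 + q.2) with hFab_def
      have hFabm : Measurable Fab := hf.comp (measurable_fst.add measurable_snd)
      have hFabX : Integrable Fab (ρ.prod μk) := by
        refine ((hVρint.mul_prod hVμk).const_mul (2^p)).mono'
          hFabm.aestronglyMeasurable (Eventually.of_forall fun q => ?_)
        rw [Real.norm_eq_abs]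
        calc |Fab q| ≤ V (q.1 + q.2) := hfV _
          _ ≤ 2 ^ p * (V q.1 * V q.2) := by
              rw [hVdef, hVdef, hVdef]; exact myVmul p q.1 q.2
      have hFabY : Integrable Fab (ρ.prod νk) := by
        refine ((hVρint.mul_prod hVνk).const_mul (2^p)).mono'
          hFabm.aestronglyMeasurable (Eventually.of_forall fun q => ?_)
        rw [Real.norm_eq_abs]
        calc |Fab q| ≤ V (q.1 + q.2) := hfV _
          _ ≤ 2 ^ p * (V q.1 * V q.2) := by
              rw [hVdef, hVdef, hVdef]; exact myVmul p q.1 q.2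
      have hIX : ∫ ω, f (T ω + X k' ω) ∂P = ∫ a, (∫ b, f (a + b) ∂μk) ∂ρ := by
        have h1 : ∫ ω, f (T ω + X k' ω) ∂P
            = ∫ q, Fab q ∂(P.map (fun ω => (T ω, X k' ω))) :=
          (integral_map (hTmeas.aemeasurable.prodMk (hXmeas k').aemeasurable)
            hFabm.aestronglyMeasurable).symm
        rw [h1, hmapTX, integral_prod _ hFabX]
      have hIY : ∫ ω, f (T ω + Y k' ω) ∂P = ∫ a, (∫ b, f (a + b) ∂νk) ∂ρ := by
        have h1 : ∫ ω, f (T ω + Y k' ω) ∂P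
            = ∫ q, Fab q ∂(P.map (fun ω => (T ω, Y k' ω))) :=
          (integral_map (hTmeas.aemeasurable.prodMk (hYmeas k').aemeasurable)
            hFabm.aestronglyMeasurable).symm
        rw [h1, hmapTY, integral_prod _ hFabY]
      have hdiff : F (k+1) - F k
          = ∫ a, ((∫ b, f (a + b) ∂μk) - ∫ b, f (a + b) ∂νk) ∂ρ := by
        have e1 : F (k+1) = ∫ ω, f (T ω + X k' ω) ∂P := by
          simp only [hF_def, hSk1]
        have e2 : F k = ∫ ω, f (T ω + Y k' ω) ∂P := by
          simp only [hF_def, hSk]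
        rw [e1, e2, hIX, hIY,
          integral_sub hFabX.integral_prod_left hFabY.integral_prod_left]
      have hfV' : ∀ x, |f x| ≤ 1 + |x| ^ p := fun x => hfV x
      have hμk' : Integrable (fun x => 1 + |x| ^ p) μk := hVμk
      have hνk' : Integrable (fun x => 1 + |x| ^ p) νk := hVνk
      have hshift : ∀ a : ℝ,
          |(∫ b, f (a + b) ∂μk) - ∫ b, f (a + b) ∂νk| ≤ (2 ^ p * D) * V a := by
        intro a
        have h1 := myShift p hμk' hνk' f hf hfV' a
        have h2 : vDist (fun x => 1 + |x| ^ p) μk νk ≤ D := hD k'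
        have h3 : (0:ℝ) ≤ 2 ^ p * (1 + |a| ^ p) := by positivity
        calc |(∫ b, f (a + b) ∂μk) - ∫ b, f (a + b) ∂νk|
            ≤ 2 ^ p * (1 + |a| ^ p) * vDist (fun x => 1 + |x| ^ p) μk νk := h1
          _ ≤ 2 ^ p * (1 + |a| ^ p) * D := mul_le_mul_of_nonneg_left h2 h3
          _ = (2 ^ p * D) * V a := by rw [hVdef]; ring
      have hnormle : |F (k+1) - F k| ≤ ∫ a, (2 ^ p * D) * V a ∂ρ := by
        rw [hdiff, ← Real.norm_eq_abs]
        refine norm_integral_le_of_norm_le (hVρint.const_mul _)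
          (Eventually.of_forall fun a => ?_)
        rw [Real.norm_eq_abs]
        exact hshift a
      have hfinal : ∫ a, (2 ^ p * D) * V a ∂ρ ≤ 2 ^ p * ((n:ℝ) ^ p * An) * D := by
        rw [integral_const_mul, hVρeq]
        have h1 : (0:ℝ) ≤ 2 ^ p * D := by positivity
        calc 2 ^ p * D * ∫ ω, V (T ω) ∂P ≤ 2 ^ p * D * ((n:ℝ) ^ p * An) :=
              mul_le_mul_of_nonneg_left hVTle h1
          _ = 2 ^ p * ((n:ℝ) ^ p * An) * D := by ring
      exact le_trans hnormle hfinal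
    -- sum up
    have hFn : ∫ ω, f (∑ i, X i ω) ∂P = F n := by simp only [hF_def, hSn]
    have hF0 : ∫ ω, f (∑ i, Y i ω) ∂P = F 0 := by simp only [hF_def, hS0]
    rw [hFn, hF0]
    have htele : F n - F 0 = ∑ k ∈ Finset.range n, (F (k+1) - F k) :=
      (Finset.sum_range_sub F n).symm
    calc |F n - F 0| = |∑ k ∈ Finset.range n, (F (k+1) - F k)| := by rw [htele]
      _ ≤ ∑ k ∈ Finset.range n, |F (k+1) - F k| := Finset.abs_sum_le_sum_abs _ _
      _ ≤ (Finset.range n).card • (2 ^ p * ((n:ℝ) ^ p * An) * D) :=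
          Finset.sum_le_card_nsmul _ _ _ hterm
      _ = (n:ℝ) * (2 ^ p * ((n:ℝ) ^ p * An) * D) := by
          rw [Finset.card_range, nsmul_eq_mul]
      _ = 2 ^ p * (n:ℝ) ^ (p+1) * An * D := by rw [pow_succ]; ring
  -- conclude
  haveI : Nonempty {f : ℝ → ℝ // Measurable f ∧ ∀ x, |f x| ≤ V x} :=
    ⟨⟨0, measurable_const, fun x => by simpa using hV0 x⟩⟩
  have hSX : Measurable fun ω => ∑ i, X i ω :=
    Finset.measurable_sum _ (fun i _ => hXmeas i)
  have hSY : Measurable fun ω => ∑ i, Y i ω :=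
    Finset.measurable_sum _ (fun i _ => hYmeas i)
  refine ciSup_le ?_
  rintro ⟨f, hf, hfV⟩
  simp only
  rw [integral_map hSX.aemeasurable hf.aestronglyMeasurable,
    integral_map hSY.aemeasurable hf.aestronglyMeasurable]
  have h1 := key f hf hfV
  have h2 : (2:ℝ) ^ p ≤ 2 ^ (p+1) := pow_le_pow_right₀ (by norm_num) (Nat.le_succ p)
  have h3 : (0:ℝ) ≤ (n:ℝ) ^ (p+1) * (An * D) := by
    have : (0:ℝ) ≤ An := le_trans zero_le_one hAn1
    positivity
  calc |(∫ ω, f (∑ i, X i ω) ∂P) - ∫ ω, f (∑ i, Y i ω) ∂P|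
      ≤ 2 ^ p * (n:ℝ) ^ (p+1) * An * D := h1
    _ = 2 ^ p * ((n:ℝ) ^ (p+1) * (An * D)) := by ring
    _ ≤ 2 ^ (p+1) * ((n:ℝ) ^ (p+1) * (An * D)) := mul_le_mul_of_nonneg_right h2 h3
    _ = 2 ^ (p+1) * (n:ℝ) ^ (p+1) * An * D := by ring


end
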